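/- The function c₁ is antitone (monotone nonincreasing), c₁(x) < 0 for every x ∈ ℝ, c₁(x) → 0 as x → −∞, c₁(x) → −I as x → +∞; the critical set {x : c₁′(x) = 0} equals {x : P(x) = 0}, a closed and discrete subset of ℝ; the set of critical values c₁({x : P(x) = 0}) is a discrete and closed subset of the subspace ℝ ∖ {0, −I}; and 0 lies in the closure of the set of critical values but is not a critical value. -/

import Mathlib

open Filter MeasureTheory Set Topology

theorem stmt13 (P : ℝ → ℝ) (hP : AnalyticOnNhd ℝ P Set.univ)
    (hP0 : ∀ x : ℝ, 0 ≤ P x) (hPne : ∃ x : ℝ, P x ≠ 0)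
    (hzero : ¬ BddBelow {x : ℝ | P x = 0})
    (hInt : Integrable (fun t : ℝ => Real.exp t * P t))
    (I : ℝ) (hI : I = ∫ t : ℝ, Real.exp t * P t)
    (c₁ : ℝ → ℝ) (hc₁ : ∀ x : ℝ, c₁ x = -∫ t in Set.Iic x, Real.exp t * P t) :
    Antitone c₁ ∧ (∀ x : ℝ, c₁ x < 0) ∧
      Tendsto c₁ atBot (nhds 0) ∧ Tendsto c₁ atTop (nhds (-I)) ∧
      {x : ℝ | deriv c₁ x = 0} = {x : ℝ | P x = 0} ∧
      (∀ y : ℝ, ¬ AccPt y (𝓟 {x : ℝ | P x = 0})) ∧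
      (∀ y : ℝ, y ∉ ({0, -I} : Set ℝ) → ¬ AccPt y (𝓟 (c₁ '' {x : ℝ | P x = 0}))) ∧
      (0 : ℝ) ∈ closure (c₁ '' {x : ℝ | P x = 0}) ∧
      0 ∉ c₁ '' {x : ℝ | P x = 0} := by
  obtain ⟨x₀, hx₀⟩ := hPne
  set f : ℝ → ℝ := fun t => Real.exp t * P t with hfdef
  set Z : Set ℝ := {x : ℝ | P x = 0} with hZdef
  have hPc : Continuous P := by
    rw [← continuousOn_univ]; exact hP.continuousOn
  have hfc : Continuous f := Real.continuous_exp.mul hPc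
  have hf0 : ∀ t, 0 ≤ f t := fun t => mul_nonneg (Real.exp_pos t).le (hP0 t)
  -- no accumulation points of Z
  have hacc : ∀ y : ℝ, ¬ AccPt y (𝓟 Z) := by
    intro y hy
    rw [accPt_iff_frequently] at hy
    have hfreq : ∃ᶠ z in 𝓝[≠] y, P z = 0 := by
      rw [frequently_nhdsWithin_iff]
      exact hy.mono fun z hz => ⟨hz.2, hz.1⟩
    have := hP.eqOn_zero_of_preconnected_of_frequently_eq_zero isPreconnected_univ
      (mem_univ y) hfreq
    exact hx₀ (this (mem_univ x₀))
  have hZcd : IsClosed Z ∧ DiscreteTopology Z := by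
    rw [← isDiscrete_iff_discreteTopology, isClosed_and_discrete_iff]
    intro x
    rw [disjoint_iff]
    by_contra h
    exact hacc x ⟨h⟩
  -- Z is countable hence null
  have hZfin : ∀ a b : ℝ, (Z ∩ Icc a b).Finite := by
    intro a b
    have hcomp : IsCompact (Z ∩ Icc a b) := isCompact_Icc.inter_left hZcd.1
    have : DiscreteTopology (Z ∩ Icc a b : Set ℝ) :=
      DiscreteTopology.of_subset hZcd.2 inter_subset_left
    exact hcomp.finite (isDiscrete_iff_discreteTopology.mpr this)
  have hZc : Z.Countable := by
    have : Z = ⋃ n : ℕ, Z ∩ Icc (-(n : ℝ)) n := by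
      ext z
      simp only [mem_iUnion, mem_inter_iff, mem_Icc]
      refine ⟨fun hz => ?_, fun ⟨n, hn, _⟩ => hn⟩
      obtain ⟨n, hn⟩ := exists_nat_ge |z|
      exact ⟨n, hz, by cases abs_le.mp hn with | intro h1 h2 => exact ⟨h1, h2⟩⟩
    rw [this]
    exact countable_iUnion fun n => (hZfin _ _).countable
  have hμZ : volume Z = 0 := hZc.measure_zero _
  -- positivity of integrals over non-null sets
  have hpos : ∀ s : Set ℝ, MeasurableSet s → volume s ≠ 0 → 0 < ∫ t in s, f t := by
    intro s hs hs0
    rw [setIntegral_pos_iff_support_of_nonneg_ae (ae_of_all _ hf0) hInt.integrableOn]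
    have hsupp : Function.support f = Zᶜ := by
      ext t
      simp only [Function.mem_support, mem_compl_iff, hZdef, mem_setOf_eq, hfdef]
      constructor
      · intro h hP'; exact h (by rw [hP']; ring)
      · intro h h'; exact h ((mul_eq_zero.mp h').resolve_left (Real.exp_ne_zero t))
    rw [hsupp]
    have : Zᶜ ∩ s = s \ Z := by ext t; simp [mem_diff, and_comm]
    rw [this, measure_diff_null hμZ]
    exact hs0.bot_lt
  have hIicpos : ∀ x : ℝ, 0 < ∫ t in Iic x, f t := fun x =>
    hpos _ measurableSet_Iic (by rw [Real.volume_Iic]; exact ENNReal.top_ne_zero)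
  -- strict antitonicity
  have hstrict : StrictAnti c₁ := by
    intro a b hab
    have hsub : (0:ℝ) < ∫ t in Ioc a b, f t := by
      refine hpos _ measurableSet_Ioc ?_
      rw [Real.volume_Ioc]
      simp [sub_pos.mpr hab, ne_of_gt, hab]
    have hdiff := intervalIntegral.integral_Iic_sub_Iic (μ := volume) (f := f)
      (a := a) (b := b) hInt.integrableOn hInt.integrableOn
    rw [intervalIntegral.integral_of_le hab.le] at hdiff
    rw [hc₁ a, hc₁ b]
    have : (∫ t in Iic a, f t) < ∫ t in Iic b, f t := by linarith
    linarith
  have hanti : Antitone c₁ := hstrict.antitone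
  -- negativity
  have hneg : ∀ x : ℝ, c₁ x < 0 := by
    intro x; rw [hc₁ x]; linarith [hIicpos x]
  -- limits
  have hbot : Tendsto c₁ atBot (𝓝 0) := by
    have h := tendsto_setIntegral_of_antitone (μ := volume) (f := f) (ι := ℝᵒᵈ)
      (s := fun x : ℝᵒᵈ => Iic (OrderDual.ofDual x)) (fun _ => measurableSet_Iic)
      (fun a b hab => Iic_subset_Iic.mpr hab) ⟨OrderDual.toDual 0, hInt.integrableOn⟩
    have he : (⋂ x : ℝᵒᵈ, Iic (OrderDual.ofDual x)) = (∅ : Set ℝ) := by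
      ext z; simp only [mem_iInter, mem_Iic, mem_empty_iff_false, iff_false, not_forall]
      exact ⟨OrderDual.toDual (z - 1), by simp⟩
    rw [he] at h
    have h' : Tendsto (fun x : ℝ => ∫ t in Iic x, f t) atBot (𝓝 0) := by
      rw [Measure.restrict_empty, integral_zero_measure] at h; exact h
    have := h'.neg
    rw [neg_zero] at this
    exact this.congr fun x => (hc₁ x).symm
  have htop : Tendsto c₁ atTop (𝓝 (-I)) := by
    have h := tendsto_setIntegral_of_monotone (μ := volume) (f := f) (ι := ℝ)
      (s := fun x : ℝ => Iic x) (fun _ => measurableSet_Iic)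
      (fun a b hab => Iic_subset_Iic.mpr hab) (by rw [iUnion_Iic]; exact hInt.integrableOn)
    rw [iUnion_Iic, Measure.restrict_univ] at h
    have := h.neg
    rw [hI]
    exact this.congr fun x => (hc₁ x).symm
  -- derivative
  have hderiv : ∀ x : ℝ, HasDerivAt c₁ (-(f x)) x := by
    intro x
    have h1 : HasDerivAt (fun u : ℝ => ∫ t in (0:ℝ)..u, f t) (f x) x :=
      (hfc.integral_hasStrictDerivAt 0 x).hasDerivAt
    have h2 := h1.const_sub (-∫ t in Iic (0:ℝ), f t)
    have heq : (fun u : ℝ => (-∫ t in Iic (0:ℝ), f t) - ∫ t in (0:ℝ)..u, f t) = c₁ := by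
      funext u
      have := intervalIntegral.integral_Iic_sub_Iic (μ := volume) (f := f)
        (a := (0:ℝ)) (b := u) hInt.integrableOn hInt.integrableOn
      rw [hc₁ u]; linarith
    rw [heq] at h2
    exact h2
  have hcrit : {x : ℝ | deriv c₁ x = 0} = Z := by
    ext x
    rw [mem_setOf_eq, (hderiv x).deriv, hZdef, mem_setOf_eq, neg_eq_zero, hfdef]
    simp [Real.exp_ne_zero x]
  -- range bounds : -I < c₁ x
  have hlb : ∀ x : ℝ, -I < c₁ x := by
    intro x
    have hIoi : 0 < ∫ t in Ioi x, f t :=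
      hpos _ measurableSet_Ioi (by rw [Real.volume_Ioi]; exact ENNReal.top_ne_zero)
    have hsplit := intervalIntegral.integral_Iic_add_Ioi (μ := volume) (f := f) (b := x)
      hInt.integrableOn hInt.integrableOn
    rw [hc₁ x, hI]
    linarith
  refine ⟨hanti, hneg, hbot, htop, hcrit, hacc, ?_, ?_, ?_⟩
  · -- critical values accumulate only at 0 and -I
    intro y hy hyacc
    rw [mem_insert_iff, mem_singleton_iff] at hy
    push_neg at hy
    have himg : c₁ '' Z ⊆ Ioo (-I) 0 := by
      rintro _ ⟨x, _, rfl⟩; exact ⟨hlb x, hneg x⟩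
    by_cases hyI : y ∈ Icc (-I) 0
    · have hyIoo : y ∈ Ioo (-I) 0 := by
        rcases hyI with ⟨h1, h2⟩
        exact ⟨lt_of_le_of_ne h1 (Ne.symm hy.2), lt_of_le_of_ne h2 hy.1⟩
      obtain ⟨a, ha⟩ := (hbot.eventually (eventually_gt_nhds hyIoo.2)).exists
      obtain ⟨b, hb⟩ := (htop.eventually (eventually_lt_nhds hyIoo.1)).exists
      set F : Set ℝ := c₁ '' (Z ∩ Icc a b) with hFdef
      have hFfin : F.Finite := (hZfin a b).image c₁
      have hV : Ioo (c₁ b) (c₁ a) ∩ (F \ {y})ᶜ ∈ 𝓝 y := by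
        refine Filter.inter_mem (Ioo_mem_nhds hb ha) ?_
        refine IsOpen.mem_nhds (hFfin.diff.isClosed.isOpen_compl) ?_
        simp [mem_compl_iff, mem_diff]
      rw [accPt_iff_nhds] at hyacc
      obtain ⟨z, ⟨⟨hz1, hz2⟩, hz3⟩, hzy⟩ := hyacc _ hV
      obtain ⟨x, hxZ, rfl⟩ := hz3
      have hax : a ≤ x := by
        by_contra h
        exact absurd (hstrict (lt_of_not_ge h)) (by push_neg; exact hz1.2.le)
      have hxb : x ≤ b := by
        by_contra h
        exact absurd (hstrict (lt_of_not_ge h)) (by push_neg; exact hz1.1.le)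
      exact hz2 ⟨⟨x, ⟨hxZ, hax, hxb⟩, rfl⟩, hzy⟩
    · rw [accPt_iff_nhds] at hyacc
      obtain ⟨z, ⟨hz1, hz2⟩, _⟩ := hyacc (Icc (-I) 0)ᶜ (isClosed_Icc.isOpen_compl.mem_nhds hyI)
      exact hz1 (Ioo_subset_Icc_self (himg hz2))
  · -- 0 in closure of critical values
    rw [Metric.mem_closure_iff]
    intro ε hε
    have hev : ∀ᶠ x in atBot, dist (c₁ x) 0 < ε :=
      hbot.eventually (Metric.ball_mem_nhds 0 hε)
    obtain ⟨M, hM⟩ := eventually_atBot.mp hev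
    obtain ⟨x, hxZ, hxM⟩ := not_bddBelow_iff.mp hzero M
    exact ⟨c₁ x, ⟨x, hxZ, rfl⟩, by rw [dist_comm]; exact hM x hxM.le⟩
  · rintro ⟨x, _, hcx⟩
    exact (hneg x).ne hcx
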